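/- Let λ > 1. Define, for x₀ > λ^{−λ}, T₊(x₀) := 2∫₀¹ (λ²(1−ξ²) − x₀^{−2/λ}(1 − ξ^{(2λ−2)/λ}))^{−1/2} dξ, and, for x₀ > 0, T₋(x₀) := 2∫₀¹ (λ²(1−ξ²) + x₀^{−2/λ}(1 − ξ^{(2λ−2)/λ}))^{−1/2} dξ. Then both integrals are finite on the stated ranges; T₊ is strictly decreasing on (λ^{−λ}, ∞) with lim_{x₀ → (λ^{−λ})⁺} T₊(x₀) = π and lim_{x₀ → ∞} T₊(x₀) = π/λ; and T₋ is strictly increasing on (0, ∞) with lim_{x₀ → 0⁺} T₋(x₀) = 0 and lim_{x₀ → ∞} T₋(x₀) = π/λ. -/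

import Mathlib

open Real Set Filter MeasureTheory intervalIntegral
open Topology

noncomputable def LSEfun (x : ℝ) : ℝ := (1 - x ^ (2:ℕ)) ^ (-(1:ℝ)/2)

lemma LSsin_img : Real.sin '' (Ioo 0 (π/2)) = Ioo (0:ℝ) 1 := by
  ext x
  constructor
  · rintro ⟨θ, hθ, rfl⟩
    refine ⟨Real.sin_pos_of_pos_of_lt_pi hθ.1 (hθ.2.trans (by linarith [Real.pi_pos])), ?_⟩
    have : Real.sin θ < Real.sin (π/2) := by
      refine Real.strictMonoOn_sin ⟨by linarith [hθ.1, Real.pi_pos], hθ.2.le⟩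
        ⟨by linarith [Real.pi_pos], le_refl _⟩ hθ.2
    simpa [Real.sin_pi_div_two] using this
  · intro hx
    exact ⟨Real.arcsin x, ⟨Real.arcsin_pos.mpr hx.1, Real.arcsin_lt_pi_div_two.mpr hx.2⟩,
      Real.sin_arcsin (by linarith [hx.1]) hx.2.le⟩

lemma LSsin_key : ∀ θ ∈ Ioo (0:ℝ) (π/2), |Real.cos θ| • LSEfun (Real.sin θ) = 1 := by
  intro θ hθ
  have hc : 0 < Real.cos θ := Real.cos_pos_of_mem_Ioo ⟨by linarith [hθ.1, Real.pi_pos], hθ.2⟩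
  have h1 : 1 - Real.sin θ ^ (2:ℕ) = Real.cos θ ^ (2:ℕ) := by
    have := Real.sin_sq_add_cos_sq θ; linarith
  have h2 : (Real.cos θ ^ (2:ℕ) : ℝ) ^ (-(1:ℝ)/2) = (Real.cos θ)⁻¹ := by
    rw [← Real.rpow_natCast (Real.cos θ) 2, ← Real.rpow_mul hc.le]
    norm_num [Real.rpow_neg_one]
  simp only [LSEfun, h1, h2, smul_eq_mul, abs_of_pos hc]
  field_simp

lemma LSE_int : IntegrableOn LSEfun (Ioo (0:ℝ) 1) := by
  have hderiv : ∀ θ ∈ Ioo (0:ℝ) (π/2),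
      HasDerivWithinAt Real.sin (Real.cos θ) (Ioo 0 (π/2)) θ :=
    fun θ _ => (Real.hasDerivAt_sin θ).hasDerivWithinAt
  have hsub : Ioo (0:ℝ) (π/2) ⊆ Icc (-(π/2)) (π/2) :=
    fun θ hθ => ⟨by linarith [hθ.1, Real.pi_pos], hθ.2.le⟩
  have hinj : InjOn Real.sin (Ioo 0 (π/2)) :=
    fun a ha b hb h => Real.injOn_sin (hsub ha) (hsub hb) h
  rw [← LSsin_img,
    integrableOn_image_iff_integrableOn_abs_deriv_smul measurableSet_Ioo hderiv hinj]
  have : IntegrableOn (fun _ : ℝ => (1:ℝ)) (Ioo 0 (π/2)) := by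
    simp [integrableOn_const, Real.volume_Ioo]
  exact this.congr_fun (fun θ hθ => (LSsin_key θ hθ).symm) measurableSet_Ioo

lemma LSE_val : ∫ x in Ioo (0:ℝ) 1, LSEfun x = π/2 := by
  have hderiv : ∀ θ ∈ Ioo (0:ℝ) (π/2),
      HasDerivWithinAt Real.sin (Real.cos θ) (Ioo 0 (π/2)) θ :=
    fun θ _ => (Real.hasDerivAt_sin θ).hasDerivWithinAt
  have hsub : Ioo (0:ℝ) (π/2) ⊆ Icc (-(π/2)) (π/2) :=
    fun θ hθ => ⟨by linarith [hθ.1, Real.pi_pos], hθ.2.le⟩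
  have hinj : InjOn Real.sin (Ioo 0 (π/2)) :=
    fun a ha b hb h => Real.injOn_sin (hsub ha) (hsub hb) h
  rw [← LSsin_img, integral_image_eq_integral_abs_deriv_smul measurableSet_Ioo hderiv hinj,
    setIntegral_congr_fun measurableSet_Ioo LSsin_key]
  simp [Real.volume_Ioo, ENNReal.toReal_ofReal Real.pi_div_two_pos.le]
  exact Real.pi_div_two_pos.le

noncomputable def LSDfun (lam : ℝ) (x : ℝ) : ℝ :=
  (x ^ ((2*lam-2)/lam) - x ^ (2:ℕ)) ^ (-(1:ℝ)/2)

section D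
variable {lam : ℝ} (hlam : 1 < lam)
include hlam

lemma LSlam_pos : (0:ℝ) < lam := lt_trans one_pos hlam

lemma LSrpow_img : (fun u : ℝ => u ^ lam) '' (Ioo 0 1) = Ioo (0:ℝ) 1 := by
  have hl0 := LSlam_pos hlam
  ext x
  constructor
  · rintro ⟨u, hu, rfl⟩
    exact ⟨Real.rpow_pos_of_pos hu.1 _, Real.rpow_lt_one hu.1.le hu.2 hl0⟩
  · intro hx
    refine ⟨x ^ (1/lam), ⟨Real.rpow_pos_of_pos hx.1 _,
      Real.rpow_lt_one hx.1.le hx.2 (by positivity)⟩, ?_⟩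
    show (x ^ (1/lam)) ^ lam = x
    rw [← Real.rpow_mul hx.1.le, one_div_mul_cancel hl0.ne', Real.rpow_one]

lemma LSrpow_inj : InjOn (fun u : ℝ => u ^ lam) (Ioo 0 1) := by
  have hl0 := LSlam_pos hlam
  intro a ha b hb h
  rcases lt_trichotomy a b with hab | hab | hab
  · exact absurd h (ne_of_lt (Real.rpow_lt_rpow ha.1.le hab hl0))
  · exact hab
  · exact absurd h.symm (ne_of_lt (Real.rpow_lt_rpow hb.1.le hab hl0))

omit hlam in
lemma LSrpow_deriv : ∀ u ∈ Ioo (0:ℝ) 1,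
    HasDerivWithinAt (fun u : ℝ => u ^ lam) (lam * u ^ (lam - 1)) (Ioo 0 1) u :=
  fun u hu => (Real.hasDerivAt_rpow_const (Or.inl hu.1.ne')).hasDerivWithinAt

lemma LSD_key : ∀ u ∈ Ioo (0:ℝ) 1,
    |lam * u ^ (lam - 1)| • LSDfun lam (u ^ lam) = lam * LSEfun u := by
  have hl0 := LSlam_pos hlam
  intro u hu
  have hu0 : (0:ℝ) < u := hu.1
  have hup : (0:ℝ) < u ^ (lam - 1) := Real.rpow_pos_of_pos hu0 _
  have he : lam * ((2*lam-2)/lam) = 2*lam - 2 := by field_simp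
  have h1 : (u ^ lam) ^ ((2*lam-2)/lam) = u ^ (2*lam-2) := by
    rw [← Real.rpow_mul hu0.le, he]
  have h2 : (u ^ lam) ^ (2:ℕ) = u ^ (2*lam) := by
    rw [← Real.rpow_natCast (u ^ lam) 2, ← Real.rpow_mul hu0.le]
    norm_num; ring_nf
  have h3 : u ^ (2*lam) = u ^ (2*lam-2) * u ^ (2:ℕ) := by
    rw [← Real.rpow_natCast u 2, ← Real.rpow_add hu0]
    norm_num
  have hsq : (0:ℝ) ≤ 1 - u ^ (2:ℕ) := by
    have : u ^ (2:ℕ) ≤ 1 := by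
      have := pow_le_one₀ hu0.le hu.2.le (n := 2); simpa using this
    linarith
  have h4 : (u ^ lam) ^ ((2*lam-2)/lam) - (u ^ lam) ^ (2:ℕ)
      = u ^ (2*lam-2) * (1 - u ^ (2:ℕ)) := by
    rw [h1, h2, h3]; ring
  have h5 : (u ^ (2*lam-2) * (1 - u ^ (2:ℕ))) ^ (-(1:ℝ)/2)
      = (u ^ (lam-1))⁻¹ * (1 - u ^ (2:ℕ)) ^ (-(1:ℝ)/2) := by
    rw [Real.mul_rpow (Real.rpow_nonneg hu0.le _) hsq]
    congr 1
    rw [← Real.rpow_mul hu0.le, ← Real.rpow_neg hu0.le]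
    congr 1
    ring
  simp only [LSDfun, LSEfun, h4, h5, smul_eq_mul,
    abs_of_pos (mul_pos hl0 hup)]
  field_simp

lemma LSD_int : IntegrableOn (LSDfun lam) (Ioo (0:ℝ) 1) := by
  rw [← LSrpow_img hlam,
    integrableOn_image_iff_integrableOn_abs_deriv_smul measurableSet_Ioo
      (LSrpow_deriv (lam := lam)) (LSrpow_inj hlam)]
  exact IntegrableOn.congr_fun (LSE_int.const_mul lam)
    (fun u hu => (LSD_key hlam u hu).symm) measurableSet_Ioo

lemma LSD_val : ∫ x in Ioo (0:ℝ) 1, LSDfun lam x = lam * (π/2) := by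
  rw [← LSrpow_img hlam,
    integral_image_eq_integral_abs_deriv_smul measurableSet_Ioo
      (LSrpow_deriv (lam := lam)) (LSrpow_inj hlam),
    setIntegral_congr_fun measurableSet_Ioo (LSD_key hlam)]
  rw [MeasureTheory.integral_const_mul, LSE_val]

end D

noncomputable def LSG (lam c ξ : ℝ) : ℝ :=
  (lam ^ 2 * (1 - ξ ^ (2:ℕ)) - c * (1 - ξ ^ ((2*lam-2)/lam))) ^ (-(1:ℝ)/2)

section G
variable {lam : ℝ} (hlam : 1 < lam)
include hlam

lemma LShe0 : 0 < (2*lam-2)/lam := by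
  apply div_pos (by linarith) (LSlam_pos hlam)

lemma LShe2 : (2*lam-2)/lam < 2 := by
  rw [div_lt_iff₀ (LSlam_pos hlam)]; linarith

lemma LSxe_lt_one {ξ : ℝ} (hξ : ξ ∈ Ioo (0:ℝ) 1) : ξ ^ ((2*lam-2)/lam) < 1 :=
  Real.rpow_lt_one hξ.1.le hξ.2 (LShe0 hlam)

lemma LSDpos {ξ : ℝ} (hξ : ξ ∈ Ioo (0:ℝ) 1) : 0 < ξ ^ ((2*lam-2)/lam) - ξ ^ (2:ℕ) := by
  have h : ξ ^ ((2:ℕ):ℝ) < ξ ^ ((2*lam-2)/lam) := by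
    apply Real.rpow_lt_rpow_of_exponent_gt hξ.1 hξ.2
    exact_mod_cast LShe2 hlam
  rw [Real.rpow_natCast] at h
  linarith

lemma LSinner_lb {c ξ : ℝ} (hc : c ≤ lam ^ 2) (hξ : ξ ∈ Ioo (0:ℝ) 1) :
    lam ^ 2 * (ξ ^ ((2*lam-2)/lam) - ξ ^ (2:ℕ))
      ≤ lam ^ 2 * (1 - ξ ^ (2:ℕ)) - c * (1 - ξ ^ ((2*lam-2)/lam)) := by
  nlinarith [mul_nonneg (sub_nonneg.2 hc) (sub_nonneg.2 (LSxe_lt_one hlam hξ).le)]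

lemma LSinner_pos {c ξ : ℝ} (hc : c ≤ lam ^ 2) (hξ : ξ ∈ Ioo (0:ℝ) 1) :
    0 < lam ^ 2 * (1 - ξ ^ (2:ℕ)) - c * (1 - ξ ^ ((2*lam-2)/lam)) :=
  lt_of_lt_of_le (mul_pos (by positivity) (LSDpos hlam hξ)) (LSinner_lb hlam hc hξ)

lemma LSsq_rpow : ((lam ^ 2 : ℝ)) ^ (-(1:ℝ)/2) = lam⁻¹ := by
  have hl0 := LSlam_pos hlam
  rw [← Real.rpow_natCast lam 2, ← Real.rpow_mul hl0.le]
  norm_num [Real.rpow_neg_one]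

lemma LSG_le {c ξ : ℝ} (hc : c ≤ lam ^ 2) (hξ : ξ ∈ Ioo (0:ℝ) 1) :
    LSG lam c ξ ≤ lam⁻¹ * LSDfun lam ξ := by
  have h1 : LSG lam c ξ ≤ (lam ^ 2 * (ξ ^ ((2*lam-2)/lam) - ξ ^ (2:ℕ))) ^ (-(1:ℝ)/2) :=
    Real.rpow_le_rpow_of_nonpos (mul_pos (by positivity) (LSDpos hlam hξ))
      (LSinner_lb hlam hc hξ) (by norm_num)
  refine h1.trans_eq ?_
  rw [Real.mul_rpow (by positivity) (LSDpos hlam hξ).le, LSsq_rpow hlam]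
  rfl

omit hlam in
lemma LSG_meas (c : ℝ) : Measurable (LSG lam c) := by
  unfold LSG; fun_prop

lemma LSG_intOn {c : ℝ} (hc : c ≤ lam ^ 2) : IntegrableOn (LSG lam c) (Ioo (0:ℝ) 1) := by
  apply Integrable.mono' ((LSD_int hlam).const_mul lam⁻¹)
    (LSG_meas c).aestronglyMeasurable
  refine (ae_restrict_mem measurableSet_Ioo).mono fun ξ hξ => ?_
  rw [Real.norm_eq_abs,
    abs_of_nonneg (show (0:ℝ) ≤ LSG lam c ξ from
      Real.rpow_nonneg (LSinner_pos hlam hc hξ).le _)]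
  exact LSG_le hlam hc hξ

lemma LSG_iint {c : ℝ} (hc : c ≤ lam ^ 2) : IntervalIntegrable (LSG lam c) volume 0 1 := by
  rw [intervalIntegrable_iff_integrableOn_Ioc_of_le zero_le_one]
  exact (LSG_intOn hlam hc).congr_set_ae Ioo_ae_eq_Ioc.symm

lemma LSD_iint : IntervalIntegrable (fun ξ => lam⁻¹ * LSDfun lam ξ) volume 0 1 := by
  rw [intervalIntegrable_iff_integrableOn_Ioc_of_le zero_le_one]
  exact MeasureTheory.IntegrableOn.congr_set_ae ((LSD_int hlam).const_mul lam⁻¹) Ioo_ae_eq_Ioc.symm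

lemma LSG_mono {c c' : ℝ} (hcc : c < c') (hc' : c' ≤ lam ^ 2) :
    ∫ ξ in (0:ℝ)..1, LSG lam c ξ < ∫ ξ in (0:ℝ)..1, LSG lam c' ξ := by
  have hc : c ≤ lam ^ 2 := hcc.le.trans hc'
  have hpos : ∀ ξ ∈ Ioo (0:ℝ) 1, 0 < LSG lam c' ξ - LSG lam c ξ := by
    intro ξ hξ
    have h1 : lam ^ 2 * (1 - ξ ^ (2:ℕ)) - c' * (1 - ξ ^ ((2*lam-2)/lam))
        < lam ^ 2 * (1 - ξ ^ (2:ℕ)) - c * (1 - ξ ^ ((2*lam-2)/lam)) := by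
      nlinarith [mul_pos (sub_pos.2 hcc) (sub_pos.2 (LSxe_lt_one hlam hξ))]
    have := Real.rpow_lt_rpow_of_neg (LSinner_pos hlam hc' hξ) h1 (by norm_num : -(1:ℝ)/2 < 0)
    simpa [LSG] using sub_pos.2 this
  have hint := ((LSG_iint hlam hc').sub (LSG_iint hlam hc))
  have := intervalIntegral_pos_of_pos_on hint hpos one_pos
  rw [intervalIntegral.integral_sub (LSG_iint hlam hc') (LSG_iint hlam hc)] at this
  linarith

end G

section DCT
variable {lam : ℝ} (hlam : 1 < lam)
include hlam

lemma LSG_dct {ι : Type*} {l : Filter ι} [l.IsCountablyGenerated] {c : ι → ℝ}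
    (hc : ∀ᶠ i in l, c i ≤ lam ^ 2) {g : ℝ → ℝ}
    (hg : ∀ ξ ∈ Ioo (0:ℝ) 1, Tendsto (fun i => LSG lam (c i) ξ) l (𝓝 (g ξ))) :
    Tendsto (fun i => ∫ ξ in (0:ℝ)..1, LSG lam (c i) ξ) l
      (𝓝 (∫ ξ in (0:ℝ)..1, g ξ)) := by
  have hae : ∀ᵐ x : ℝ ∂volume, x ≠ (1:ℝ) := by
    rw [ae_iff]
    have : {x : ℝ | ¬x ≠ 1} = {1} := by ext x; simp
    rw [this]
    exact measure_singleton 1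
  apply intervalIntegral.tendsto_integral_filter_of_dominated_convergence
    (bound := fun ξ => lam⁻¹ * LSDfun lam ξ)
  · exact Eventually.of_forall fun i => (LSG_meas (c i)).aestronglyMeasurable
  · refine hc.mono fun i hci => ?_
    filter_upwards [hae] with x hx hxI
    rw [Set.uIoc_of_le zero_le_one] at hxI
    have hxo : x ∈ Ioo (0:ℝ) 1 := ⟨hxI.1, lt_of_le_of_ne hxI.2 hx⟩
    rw [Real.norm_eq_abs,
      abs_of_nonneg (show (0:ℝ) ≤ LSG lam (c i) x from
        Real.rpow_nonneg (LSinner_pos hlam hci hxo).le _)]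
    exact LSG_le hlam hci hxo
  · exact LSD_iint hlam
  · filter_upwards [hae] with x hx hxI
    rw [Set.uIoc_of_le zero_le_one] at hxI
    exact hg x ⟨hxI.1, lt_of_le_of_ne hxI.2 hx⟩

lemma LSG_cont {ι : Type*} {l : Filter ι} {c : ι → ℝ} {c₀ : ℝ} (hc₀ : c₀ ≤ lam ^ 2)
    (hten : Tendsto c l (𝓝 c₀)) {ξ : ℝ} (hξ : ξ ∈ Ioo (0:ℝ) 1) :
    Tendsto (fun i => LSG lam (c i) ξ) l (𝓝 (LSG lam c₀ ξ)) := by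
  have h1 : Tendsto (fun i =>
      lam ^ 2 * (1 - ξ ^ (2:ℕ)) - c i * (1 - ξ ^ ((2*lam-2)/lam))) l
      (𝓝 (lam ^ 2 * (1 - ξ ^ (2:ℕ)) - c₀ * (1 - ξ ^ ((2*lam-2)/lam)))) :=
    tendsto_const_nhds.sub (hten.mul tendsto_const_nhds)
  exact ((Real.continuousAt_rpow_const _ _
    (Or.inl (LSinner_pos hlam hc₀ hξ).ne')).tendsto).comp h1

lemma LSG0_val : ∫ ξ in (0:ℝ)..1, LSG lam 0 ξ = π/(2*lam) := by
  have key : ∀ ξ ∈ Ioo (0:ℝ) 1, LSG lam 0 ξ = lam⁻¹ * LSEfun ξ := by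
    intro ξ hξ
    have h1 : (0:ℝ) ≤ 1 - ξ ^ (2:ℕ) := by nlinarith [hξ.1, hξ.2]
    rw [LSG, LSEfun, zero_mul, sub_zero, Real.mul_rpow (by positivity) h1, LSsq_rpow hlam]
  rw [integral_of_le zero_le_one, integral_Ioc_eq_integral_Ioo,
    setIntegral_congr_fun measurableSet_Ioo key, MeasureTheory.integral_const_mul, LSE_val]
  field_simp

lemma LSG2_val : ∫ ξ in (0:ℝ)..1, LSG lam (lam ^ 2) ξ = π/2 := by
  have key : ∀ ξ ∈ Ioo (0:ℝ) 1, LSG lam (lam ^ 2) ξ = lam⁻¹ * LSDfun lam ξ := by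
    intro ξ hξ
    have h0 : lam ^ 2 * (1 - ξ ^ (2:ℕ)) - lam ^ 2 * (1 - ξ ^ ((2*lam-2)/lam))
        = lam ^ 2 * (ξ ^ ((2*lam-2)/lam) - ξ ^ (2:ℕ)) := by ring
    rw [LSG, LSDfun, h0, Real.mul_rpow (by positivity) (LSDpos hlam hξ).le, LSsq_rpow hlam]
  rw [integral_of_le zero_le_one, integral_Ioc_eq_integral_Ioo,
    setIntegral_congr_fun measurableSet_Ioo key, MeasureTheory.integral_const_mul,
    LSD_val hlam]
  field_simp

omit hlam in
lemma LSG_neg (lam c : ℝ) (ξ : ℝ) :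
    (lam ^ 2 * (1 - ξ ^ (2:ℕ)) + c * (1 - ξ ^ ((2*lam-2)/lam))) ^ (-(1:ℝ)/2)
      = LSG lam (-c) ξ := by
  rw [LSG]; congr 1; ring

end DCT

/-- Monotonicity and limits of the life-span of hyperbolic solutions.
For `λ > 1` set
`T₊(x₀) = 2∫₀¹ (λ²(1-ξ²) - x₀^{-2/λ}(1 - ξ^{(2λ-2)/λ}))^{-1/2} dξ` for `x₀ > λ^{-λ}` and
`T₋(x₀) = 2∫₀¹ (λ²(1-ξ²) + x₀^{-2/λ}(1 - ξ^{(2λ-2)/λ}))^{-1/2} dξ` for `x₀ > 0`. Both integrals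
are finite; `T₊` strictly decreases from `π` (as `x₀ → (λ^{-λ})⁺`) to `π/λ` (as `x₀ → ∞`), and
`T₋` strictly increases from `0` (as `x₀ → 0⁺`) to `π/λ` (as `x₀ → ∞`). -/
theorem lifespan_monotonicity_hyperbolic
    (lam : ℝ) (hlam : 1 < lam)
    (Tp Tm : ℝ → ℝ)
    (hTp : ∀ x₀ : ℝ, Tp x₀ = 2 * ∫ ξ in (0:ℝ)..1,
      (lam ^ 2 * (1 - ξ ^ (2:ℕ)) - x₀ ^ (-(2 / lam)) * (1 - ξ ^ ((2 * lam - 2) / lam)))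
        ^ (-(1:ℝ)/2))
    (hTm : ∀ x₀ : ℝ, Tm x₀ = 2 * ∫ ξ in (0:ℝ)..1,
      (lam ^ 2 * (1 - ξ ^ (2:ℕ)) + x₀ ^ (-(2 / lam)) * (1 - ξ ^ ((2 * lam - 2) / lam)))
        ^ (-(1:ℝ)/2)) :
    (∀ x₀ : ℝ, lam ^ (-lam) < x₀ →
      IntervalIntegrable (fun ξ =>
        (lam ^ 2 * (1 - ξ ^ (2:ℕ)) - x₀ ^ (-(2 / lam)) * (1 - ξ ^ ((2 * lam - 2) / lam)))
          ^ (-(1:ℝ)/2)) MeasureTheory.volume 0 1) ∧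
    (∀ x₀ : ℝ, 0 < x₀ →
      IntervalIntegrable (fun ξ =>
        (lam ^ 2 * (1 - ξ ^ (2:ℕ)) + x₀ ^ (-(2 / lam)) * (1 - ξ ^ ((2 * lam - 2) / lam)))
          ^ (-(1:ℝ)/2)) MeasureTheory.volume 0 1) ∧
    StrictAntiOn Tp (Set.Ioi (lam ^ (-lam))) ∧
    Filter.Tendsto Tp (nhdsWithin (lam ^ (-lam)) (Set.Ioi (lam ^ (-lam)))) (nhds Real.pi) ∧
    Filter.Tendsto Tp Filter.atTop (nhds (Real.pi / lam)) ∧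
    StrictMonoOn Tm (Set.Ioi (0 : ℝ)) ∧
    Filter.Tendsto Tm (nhdsWithin 0 (Set.Ioi (0 : ℝ))) (nhds 0) ∧
    Filter.Tendsto Tm Filter.atTop (nhds (Real.pi / lam)) := by
  have hl0 : (0:ℝ) < lam := lt_trans one_pos hlam
  have hbase : (0:ℝ) < lam ^ (-lam) := Real.rpow_pos_of_pos hl0 _
  have h2l : (0:ℝ) < 2 / lam := by positivity
  have hceq : (lam ^ (-lam) : ℝ) ^ (-(2/lam)) = lam ^ 2 := by
    rw [← Real.rpow_mul hl0.le]
    have : -lam * -(2/lam) = 2 := by field_simp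
    rw [this, Real.rpow_two]
  have hc_lt : ∀ x₀ : ℝ, lam ^ (-lam) < x₀ → x₀ ^ (-(2/lam)) < lam ^ 2 := by
    intro x₀ hx
    have := Real.rpow_lt_rpow_of_neg hbase hx (by linarith : -(2/lam) < 0)
    rwa [hceq] at this
  -- rewrite Tp, Tm in terms of LSG
  have hTp' : Tp = fun x₀ => 2 * ∫ ξ in (0:ℝ)..1, LSG lam (x₀ ^ (-(2/lam))) ξ := by
    funext x₀; rw [hTp x₀]; rfl
  have hTm' : Tm = fun x₀ => 2 * ∫ ξ in (0:ℝ)..1, LSG lam (-(x₀ ^ (-(2/lam)))) ξ := by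
    funext x₀; rw [hTm x₀]
    congr 1
    refine intervalIntegral.integral_congr fun ξ _ => ?_
    exact LSG_neg lam (x₀ ^ (-(2/lam))) ξ
  refine ⟨?_, ?_, ?_, ?_, ?_, ?_, ?_, ?_⟩
  · -- integrability for Tp
    intro x₀ hx
    exact LSG_iint hlam (hc_lt x₀ hx).le
  · -- integrability for Tm
    intro x₀ hx
    have h1 : -(x₀ ^ (-(2/lam))) ≤ lam ^ 2 := by
      have := Real.rpow_pos_of_pos hx (-(2/lam)); nlinarith
    have hfun : (fun ξ : ℝ =>
        (lam ^ 2 * (1 - ξ ^ (2:ℕ)) + x₀ ^ (-(2 / lam)) * (1 - ξ ^ ((2 * lam - 2) / lam)))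
          ^ (-(1:ℝ)/2)) = LSG lam (-(x₀ ^ (-(2/lam)))) :=
      funext fun ξ => LSG_neg lam (x₀ ^ (-(2/lam))) ξ
    rw [hfun]
    exact LSG_iint hlam h1
  · -- StrictAntiOn Tp
    intro x hx y hy hxy
    rw [hTp']
    simp only
    have hcc : y ^ (-(2/lam)) < x ^ (-(2/lam)) :=
      Real.rpow_lt_rpow_of_neg (lt_trans hbase hx) hxy (by linarith : -(2/lam) < 0)
    have := LSG_mono hlam hcc (hc_lt x hx).le
    linarith
  · -- Tendsto Tp at base = π
    rw [hTp']
    have hval : π = 2 * ∫ ξ in (0:ℝ)..1, LSG lam (lam ^ 2) ξ := by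
      rw [LSG2_val hlam]; ring
    rw [hval]
    have hten : Tendsto (fun x₀ : ℝ => x₀ ^ (-(2/lam)))
        (𝓝[>] (lam ^ (-lam))) (𝓝 (lam ^ 2)) := by
      have hcont : ContinuousAt (fun x : ℝ => x ^ (-(2/lam))) (lam ^ (-lam)) :=
        Real.continuousAt_rpow_const _ _ (Or.inl hbase.ne')
      have := hcont.tendsto.mono_left
        (nhdsWithin_le_nhds (s := Set.Ioi (lam ^ (-lam))))
      rwa [hceq] at this
    have hc_ev : ∀ᶠ x₀ in 𝓝[>] (lam ^ (-lam)), x₀ ^ (-(2/lam)) ≤ lam ^ 2 :=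
      eventually_mem_nhdsWithin.mono fun x₀ hx => (hc_lt x₀ hx).le
    exact (LSG_dct hlam hc_ev fun ξ hξ =>
      LSG_cont hlam le_rfl hten hξ).const_mul 2
  · -- Tendsto Tp atTop = π/lam
    rw [hTp']
    have hval : π / lam = 2 * ∫ ξ in (0:ℝ)..1, LSG lam 0 ξ := by
      rw [LSG0_val hlam]; field_simp
    rw [hval]
    have hten : Tendsto (fun x₀ : ℝ => x₀ ^ (-(2/lam))) atTop (𝓝 0) :=
      tendsto_rpow_neg_atTop h2l
    have hc_ev : ∀ᶠ x₀ in atTop, (x₀:ℝ) ^ (-(2/lam)) ≤ lam ^ 2 :=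
      hten.eventually (eventually_le_nhds (by positivity))
    exact (LSG_dct hlam hc_ev fun ξ hξ =>
      LSG_cont hlam (by positivity) hten hξ).const_mul 2
  · -- StrictMonoOn Tm
    intro x hx y hy hxy
    rw [hTm']
    simp only
    have hcc : -(x ^ (-(2/lam))) < -(y ^ (-(2/lam))) := by
      have := Real.rpow_lt_rpow_of_neg (mem_Ioi.mp hx) hxy (by linarith : -(2/lam) < 0)
      linarith
    have h1 : -(y ^ (-(2/lam))) ≤ lam ^ 2 := by
      have := Real.rpow_pos_of_pos (lt_trans (mem_Ioi.mp hx) hxy) (-(2/lam)); nlinarith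
    have := LSG_mono hlam hcc h1
    linarith
  · -- Tendsto Tm at 0⁺ = 0
    rw [hTm']
    have hcten : Tendsto (fun x₀ : ℝ => x₀ ^ (-(2/lam))) (𝓝[>] (0:ℝ)) atTop := by
      have h1 : Tendsto (fun x₀ : ℝ => (x₀⁻¹) ^ (2/lam)) (𝓝[>] (0:ℝ)) atTop :=
        (tendsto_rpow_atTop h2l).comp tendsto_inv_nhdsGT_zero
      refine h1.congr' ?_
      filter_upwards [eventually_mem_nhdsWithin] with x hx
      rw [Real.inv_rpow (le_of_lt hx), ← Real.rpow_neg (le_of_lt hx)]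
    have hc_ev : ∀ᶠ x₀ in 𝓝[>] (0:ℝ), -(x₀ ^ (-(2/lam))) ≤ lam ^ 2 := by
      filter_upwards [eventually_mem_nhdsWithin] with x hx
      have := Real.rpow_pos_of_pos (mem_Ioi.mp hx) (-(2/lam)); nlinarith
    have hpt : ∀ ξ ∈ Ioo (0:ℝ) 1,
        Tendsto (fun x₀ : ℝ => LSG lam (-(x₀ ^ (-(2/lam)))) ξ) (𝓝[>] (0:ℝ)) (𝓝 0) := by
      intro ξ hξ
      have hinner : Tendsto (fun x₀ : ℝ =>
          lam ^ 2 * (1 - ξ ^ (2:ℕ)) - -(x₀ ^ (-(2/lam))) * (1 - ξ ^ ((2*lam-2)/lam)))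
          (𝓝[>] (0:ℝ)) atTop := by
        have heq : ∀ x₀ : ℝ,
            lam ^ 2 * (1 - ξ ^ (2:ℕ)) - -(x₀ ^ (-(2/lam))) * (1 - ξ ^ ((2*lam-2)/lam))
              = x₀ ^ (-(2/lam)) * (1 - ξ ^ ((2*lam-2)/lam)) + lam ^ 2 * (1 - ξ ^ (2:ℕ)) := by
          intro x₀; ring
        simp only [heq]
        exact tendsto_atTop_add_const_right _ _
          (hcten.atTop_mul_const (sub_pos.2 (LSxe_lt_one hlam hξ)))
      have hrpow : Tendsto (fun y : ℝ => y ^ (-(1:ℝ)/2)) atTop (𝓝 0) := by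
        have := tendsto_rpow_neg_atTop (by norm_num : (0:ℝ) < 1/2)
        convert this using 2
        norm_num
      exact hrpow.comp hinner
    have key := (LSG_dct hlam hc_ev hpt).const_mul 2
    simpa using key
  · -- Tendsto Tm atTop = π/lam
    rw [hTm']
    have hval : π / lam = 2 * ∫ ξ in (0:ℝ)..1, LSG lam 0 ξ := by
      rw [LSG0_val hlam]; field_simp
    rw [hval]
    have hten : Tendsto (fun x₀ : ℝ => -(x₀ ^ (-(2/lam)))) atTop (𝓝 0) := by
      have := (tendsto_rpow_neg_atTop h2l).neg
      rwa [neg_zero] at this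
    have hc_ev : ∀ᶠ x₀ in atTop, -((x₀:ℝ) ^ (-(2/lam))) ≤ lam ^ 2 :=
      hten.eventually (eventually_le_nhds (by positivity))
    have hzero : (0:ℝ) = -0 := by norm_num
    exact (LSG_dct hlam hc_ev fun ξ hξ =>
      LSG_cont hlam (by positivity) hten hξ).const_mul 2
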